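/- Any self-adjoint operator β on ℂ⁴ ⊗ ℂ² ⊗ ℂ⁴ satisfying β² = 1, βJ = Jβ, and commuting with the represented unreduced Pati-Salam algebra ℍ_R ⊕ ℍ_L ⊕ M_4(ℂ) must be of the form β = diag(η₁1₂, η₂1₂) ⊗ e₁₁ ⊗ 1₄ + 1₄ ⊗ e₂₂ ⊗ diag(η₁1₂, η₂1₂) with η₁, η₂ ∈ {±1}; in particular there are, up to overall sign, only two such operators and the nontrivial one is diag(1₂,-1₂) ⊗ e₁₁ ⊗ 1₄ + 1₄ ⊗ e₂₂ ⊗ diag(1₂,-1₂). -/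

import Mathlib

noncomputable section
open Matrix
open scoped ComplexConjugate

abbrev M2 : Type := Matrix (Fin 2) (Fin 2) ℂ
abbrev M3 : Type := Matrix (Fin 3) (Fin 3) ℂ
abbrev M4 : Type := Matrix (Fin 4) (Fin 4) ℂ
abbrev Idx : Type := Fin 4 × Fin 2 × Fin 4
abbrev M32 : Type := Matrix Idx Idx ℂ

/-- matrix unit `e_{ij}` -/
def eu {n : ℕ} (i j : Fin n) : Matrix (Fin n) (Fin n) ℂ := Matrix.single i j 1

/-- the element `A ⊗ E ⊗ B` of `M₄(ℂ) ⊗ M₂(ℂ) ⊗ M₄(ℂ)` realized as a matrix on `ℂ⁴ ⊗ ℂ² ⊗ ℂ⁴` -/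
def tp (A : M4) (E : M2) (B : M4) : M32 :=
  Matrix.of fun p q => A p.1 q.1 * E p.2.1 q.2.1 * B p.2.2 q.2.2

/-- a 4×4 matrix assembled from four 2×2 blocks -/
def bm (a b c d : M2) : M4 :=
  Matrix.reindex finSumFinEquiv finSumFinEquiv (Matrix.fromBlocks a b c d)

/-- block-diagonal `diag(a, b)` with 2×2 blocks -/
def diag22 (a b : M2) : M4 := bm a 0 0 b

/-- block-diagonal `diag(l, n)` with a scalar and a 3×3 block -/
def diag13 (l : ℂ) (n : M3) : M4 :=
  Matrix.reindex finSumFinEquiv finSumFinEquiv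
    (Matrix.fromBlocks (Matrix.diagonal fun _ : Fin 1 => l) 0 0 n)

/-- the standard embedding of the quaternions into `M₂(ℂ)` -/
def IsQuat (q : M2) : Prop := ∃ x y : ℂ, q = !![x, y; -(conj y), conj x]

/-- the Hilbert space `ℂ⁴ ⊗ ℂ² ⊗ ℂ⁴ ≅ M₄(ℂ) ⊕ M₄(ℂ)` -/
abbrev HSp : Type := Idx → ℂ

/-- index swap underlying the real structure `J` -/
def sw (p : Idx) : Idx := (p.2.2, if p.2.1 = 0 then 1 else 0, p.1)

/-- the antilinear real structure `J[v;w] = [w*;v*]` -/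
noncomputable def Jr (ψ : HSp) : HSp := fun p => conj (ψ (sw p))

/-- action of an operator on the Hilbert space -/
def act (X : M32) (ψ : HSp) : HSp := X.mulVec ψ

/-- conjugation `X ↦ J X J⁻¹` by the real structure, at the matrix level -/
noncomputable def Jconj (X : M32) : M32 := Matrix.of fun p q => conj (X (sw p) (sw q))

/-- the opposite-algebra element `J X* J⁻¹` -/
noncomputable def opp (X : M32) : M32 := Jconj Xᴴ

/-- representation of the (unreduced) Pati–Salam algebra `ℍ_R ⊕ ℍ_L ⊕ M₄(ℂ)` -/
def piPS (q₁ q₂ : M2) (m : M4) : M32 :=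
  tp (diag22 q₁ q₂) (eu 0 0) 1 + tp m (eu 1 1) 1

/-- representation of the reduced Pati–Salam algebra `ℍ_R ⊕ ℍ_L ⊕ ℂ ⊕ M₃(ℂ)` -/
def piRed (q₁ q₂ : M2) (l : ℂ) (n : M3) : M32 := piPS q₁ q₂ (diag13 l n)

/-- the grading γ -/
def gam : M32 := tp (diag22 1 (-1)) (eu 0 0) 1 + tp 1 (eu 1 1) (diag22 (-1) 1)

/-- the grading γ⋆ -/
def gamStar : M32 :=
  tp (diag22 1 (-1)) (eu 0 0) (diag13 1 (-1)) + tp (diag13 (-1) 1) (eu 1 1) (diag22 1 (-1))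

/-- the nontrivial β for the unreduced model -/
def betaPS : M32 := tp (diag22 1 (-1)) (eu 0 0) 1 + tp 1 (eu 1 1) (diag22 1 (-1))


lemma mul_tp_apply (β : M32) (A : M4) (E : M2) (B : M4) (p q : Idx) :
    (β * tp A E B) p q = ∑ j' : Fin 4, ∑ t' : Fin 2, ∑ b' : Fin 4,
      β p (j', t', b') * (A j' q.1 * E t' q.2.1 * B b' q.2.2) := by
  rw [Matrix.mul_apply, Fintype.sum_prod_type]
  simp [Fintype.sum_prod_type, tp]

lemma tp_mul_apply (β : M32) (A : M4) (E : M2) (B : M4) (p q : Idx) :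
    (tp A E B * β) p q = ∑ j' : Fin 4, ∑ t' : Fin 2, ∑ b' : Fin 4,
      (A p.1 j' * E p.2.1 t' * B p.2.2 b') * β (j', t', b') q := by
  rw [Matrix.mul_apply, Fintype.sum_prod_type]
  simp [Fintype.sum_prod_type, tp]

lemma b11_offdiag (β : M32) (hm : ∀ m : M4, β * tp m (eu 1 1) 1 = tp m (eu 1 1) 1 * β)
    (i j : Fin 4) (a b : Fin 4) (hij : i ≠ j) : β (i,1,a) (j,1,b) = 0 := by
  have h := congrFun (congrFun (hm (eu j i)) (i,1,a)) (i,1,b)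
  rw [mul_tp_apply, tp_mul_apply] at h
  simpa [eu, Matrix.single, Matrix.one_apply, Ne.symm hij] using h

lemma b11_diag (β : M32) (hm : ∀ m : M4, β * tp m (eu 1 1) 1 = tp m (eu 1 1) 1 * β)
    (i : Fin 4) (a b : Fin 4) : β (i,1,a) (i,1,b) = β (0,1,a) (0,1,b) := by
  have h := congrFun (congrFun (hm (eu i 0)) (i,1,a)) (0,1,b)
  rw [mul_tp_apply, tp_mul_apply] at h
  simpa [eu, Matrix.single, Matrix.one_apply] using h

lemma lemA (β : M32) (h : β * tp 1 (eu 0 0) 1 = tp 1 (eu 0 0) 1 * β)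
    (i : Fin 4) (a : Fin 4) (j : Fin 4) (b : Fin 4) :
    β (i,0,a) (j,1,b) = 0 ∧ β (i,1,a) (j,0,b) = 0 := by
  have h1 := congrFun (congrFun h (i,0,a)) (j,1,b)
  have h2 := congrFun (congrFun h (i,1,a)) (j,0,b)
  rw [mul_tp_apply, tp_mul_apply] at h1 h2
  simp [eu, Matrix.single, Matrix.one_apply, Finset.sum_ite_eq, Finset.sum_ite_eq'] at h1 h2
  exact ⟨h1.symm, h2⟩
def qJ : M2 := !![0, 1; -1, 0]
def qK : M2 := !![Complex.I, 0; 0, -Complex.I]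

lemma fse0 : (finSumFinEquiv (m := 2) (n := 2)).symm 0 = Sum.inl 0 := by decide
lemma fse1 : (finSumFinEquiv (m := 2) (n := 2)).symm 1 = Sum.inl 1 := by decide
lemma fse2 : (finSumFinEquiv (m := 2) (n := 2)).symm 2 = Sum.inr 0 := by decide
lemma fse3 : (finSumFinEquiv (m := 2) (n := 2)).symm 3 = Sum.inr 1 := by decide

section
variable (β : M32)
  (hq : ∀ q₁ q₂ : M2, IsQuat q₁ → IsQuat q₂ →
    β * tp (diag22 q₁ q₂) (eu 0 0) 1 = tp (diag22 q₁ q₂) (eu 0 0) 1 * β)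

lemma quatJ : IsQuat qJ := ⟨0, 1, by norm_num [qJ]⟩
lemma quatK : IsQuat qK := ⟨Complex.I, 0, by norm_num [qK, Complex.conj_I]⟩
lemma quat0 : IsQuat 0 := ⟨0, 0, by ext i j; fin_cases i <;> fin_cases j <;> simp⟩
lemma quat1 : IsQuat 1 := ⟨1, 0, by ext i j; fin_cases i <;> fin_cases j <;> simp [Matrix.one_apply]⟩

include hq in
lemma test12 (a b : Fin 4) : β (1,0,a) (2,0,b) = 0 := by
  have h := congrFun (congrFun (hq qJ 0 quatJ quat0) ((0:Fin 4),(0:Fin 2),a)) ((2:Fin 4),(0:Fin 2),b)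
  rw [mul_tp_apply, tp_mul_apply] at h
  simpa [eu, Matrix.single, Matrix.one_apply, diag22, bm, qJ,
    Fin.sum_univ_four, Fin.sum_univ_two,
    Matrix.reindex_apply, Matrix.submatrix_apply, fse0, fse1, fse2, fse3] using h.symm
end
section Main
variable (β : M32)
  (hq : ∀ q₁ q₂ : M2, IsQuat q₁ → IsQuat q₂ →
    β * tp (diag22 q₁ q₂) (eu 0 0) 1 = tp (diag22 q₁ q₂) (eu 0 0) 1 * β)

include hq in
lemma z01 (a b : Fin 4) : β (0,0,a) (1,0,b) = 0 := by
  have h := congrFun (congrFun (hq qK 0 quatK quat0) ((0:Fin 4),(0:Fin 2),a)) ((1:Fin 4),(0:Fin 2),b)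
  rw [mul_tp_apply, tp_mul_apply] at h
  simp [eu, Matrix.single, Matrix.one_apply, diag22, bm, qJ, qK,
    Fin.sum_univ_four, Fin.sum_univ_two,
    Matrix.reindex_apply, Matrix.submatrix_apply, fse0, fse1, fse2, fse3] at h
  first
  | exact h
  | linear_combination h
  | linear_combination -h
  | linear_combination (Complex.I/2) * h + β (0,0,a) (1,0,b) * Complex.I_sq
  | linear_combination (-(Complex.I)/2) * h + β (0,0,a) (1,0,b) * Complex.I_sq

include hq in
lemma z10 (a b : Fin 4) : β (1,0,a) (0,0,b) = 0 := by
  have h := congrFun (congrFun (hq qK 0 quatK quat0) ((1:Fin 4),(0:Fin 2),a)) ((0:Fin 4),(0:Fin 2),b)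
  rw [mul_tp_apply, tp_mul_apply] at h
  simp [eu, Matrix.single, Matrix.one_apply, diag22, bm, qJ, qK,
    Fin.sum_univ_four, Fin.sum_univ_two,
    Matrix.reindex_apply, Matrix.submatrix_apply, fse0, fse1, fse2, fse3] at h
  first
  | exact h
  | linear_combination h
  | linear_combination -h
  | linear_combination (Complex.I/2) * h + β (1,0,a) (0,0,b) * Complex.I_sq
  | linear_combination (-(Complex.I)/2) * h + β (1,0,a) (0,0,b) * Complex.I_sq

include hq in
lemma z23 (a b : Fin 4) : β (2,0,a) (3,0,b) = 0 := by
  have h := congrFun (congrFun (hq 0 qK quat0 quatK) ((2:Fin 4),(0:Fin 2),a)) ((3:Fin 4),(0:Fin 2),b)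
  rw [mul_tp_apply, tp_mul_apply] at h
  simp [eu, Matrix.single, Matrix.one_apply, diag22, bm, qJ, qK,
    Fin.sum_univ_four, Fin.sum_univ_two,
    Matrix.reindex_apply, Matrix.submatrix_apply, fse0, fse1, fse2, fse3] at h
  first
  | exact h
  | linear_combination h
  | linear_combination -h
  | linear_combination (Complex.I/2) * h + β (2,0,a) (3,0,b) * Complex.I_sq
  | linear_combination (-(Complex.I)/2) * h + β (2,0,a) (3,0,b) * Complex.I_sq

include hq in
lemma z32 (a b : Fin 4) : β (3,0,a) (2,0,b) = 0 := by
  have h := congrFun (congrFun (hq 0 qK quat0 quatK) ((3:Fin 4),(0:Fin 2),a)) ((2:Fin 4),(0:Fin 2),b)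
  rw [mul_tp_apply, tp_mul_apply] at h
  simp [eu, Matrix.single, Matrix.one_apply, diag22, bm, qJ, qK,
    Fin.sum_univ_four, Fin.sum_univ_two,
    Matrix.reindex_apply, Matrix.submatrix_apply, fse0, fse1, fse2, fse3] at h
  first
  | exact h
  | linear_combination h
  | linear_combination -h
  | linear_combination (Complex.I/2) * h + β (3,0,a) (2,0,b) * Complex.I_sq
  | linear_combination (-(Complex.I)/2) * h + β (3,0,a) (2,0,b) * Complex.I_sq

include hq in
lemma z02 (a b : Fin 4) : β (0,0,a) (2,0,b) = 0 := by
  have h := congrFun (congrFun (hq qJ 0 quatJ quat0) ((1:Fin 4),(0:Fin 2),a)) ((2:Fin 4),(0:Fin 2),b)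
  rw [mul_tp_apply, tp_mul_apply] at h
  simp [eu, Matrix.single, Matrix.one_apply, diag22, bm, qJ, qK,
    Fin.sum_univ_four, Fin.sum_univ_two,
    Matrix.reindex_apply, Matrix.submatrix_apply, fse0, fse1, fse2, fse3] at h
  first
  | exact h
  | linear_combination h
  | linear_combination -h
  | linear_combination (Complex.I/2) * h + β (0,0,a) (2,0,b) * Complex.I_sq
  | linear_combination (-(Complex.I)/2) * h + β (0,0,a) (2,0,b) * Complex.I_sq

include hq in
lemma z12 (a b : Fin 4) : β (1,0,a) (2,0,b) = 0 := by
  have h := congrFun (congrFun (hq qJ 0 quatJ quat0) ((0:Fin 4),(0:Fin 2),a)) ((2:Fin 4),(0:Fin 2),b)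
  rw [mul_tp_apply, tp_mul_apply] at h
  simp [eu, Matrix.single, Matrix.one_apply, diag22, bm, qJ, qK,
    Fin.sum_univ_four, Fin.sum_univ_two,
    Matrix.reindex_apply, Matrix.submatrix_apply, fse0, fse1, fse2, fse3] at h
  first
  | exact h
  | linear_combination h
  | linear_combination -h
  | linear_combination (Complex.I/2) * h + β (1,0,a) (2,0,b) * Complex.I_sq
  | linear_combination (-(Complex.I)/2) * h + β (1,0,a) (2,0,b) * Complex.I_sq

include hq in
lemma z03 (a b : Fin 4) : β (0,0,a) (3,0,b) = 0 := by
  have h := congrFun (congrFun (hq qJ 0 quatJ quat0) ((1:Fin 4),(0:Fin 2),a)) ((3:Fin 4),(0:Fin 2),b)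
  rw [mul_tp_apply, tp_mul_apply] at h
  simp [eu, Matrix.single, Matrix.one_apply, diag22, bm, qJ, qK,
    Fin.sum_univ_four, Fin.sum_univ_two,
    Matrix.reindex_apply, Matrix.submatrix_apply, fse0, fse1, fse2, fse3] at h
  first
  | exact h
  | linear_combination h
  | linear_combination -h
  | linear_combination (Complex.I/2) * h + β (0,0,a) (3,0,b) * Complex.I_sq
  | linear_combination (-(Complex.I)/2) * h + β (0,0,a) (3,0,b) * Complex.I_sq

include hq in
lemma z13 (a b : Fin 4) : β (1,0,a) (3,0,b) = 0 := by
  have h := congrFun (congrFun (hq qJ 0 quatJ quat0) ((0:Fin 4),(0:Fin 2),a)) ((3:Fin 4),(0:Fin 2),b)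
  rw [mul_tp_apply, tp_mul_apply] at h
  simp [eu, Matrix.single, Matrix.one_apply, diag22, bm, qJ, qK,
    Fin.sum_univ_four, Fin.sum_univ_two,
    Matrix.reindex_apply, Matrix.submatrix_apply, fse0, fse1, fse2, fse3] at h
  first
  | exact h
  | linear_combination h
  | linear_combination -h
  | linear_combination (Complex.I/2) * h + β (1,0,a) (3,0,b) * Complex.I_sq
  | linear_combination (-(Complex.I)/2) * h + β (1,0,a) (3,0,b) * Complex.I_sq

include hq in
lemma z20 (a b : Fin 4) : β (2,0,a) (0,0,b) = 0 := by
  have h := congrFun (congrFun (hq qJ 0 quatJ quat0) ((2:Fin 4),(0:Fin 2),a)) ((1:Fin 4),(0:Fin 2),b)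
  rw [mul_tp_apply, tp_mul_apply] at h
  simp [eu, Matrix.single, Matrix.one_apply, diag22, bm, qJ, qK,
    Fin.sum_univ_four, Fin.sum_univ_two,
    Matrix.reindex_apply, Matrix.submatrix_apply, fse0, fse1, fse2, fse3] at h
  first
  | exact h
  | linear_combination h
  | linear_combination -h
  | linear_combination (Complex.I/2) * h + β (2,0,a) (0,0,b) * Complex.I_sq
  | linear_combination (-(Complex.I)/2) * h + β (2,0,a) (0,0,b) * Complex.I_sq

include hq in
lemma z21 (a b : Fin 4) : β (2,0,a) (1,0,b) = 0 := by
  have h := congrFun (congrFun (hq qJ 0 quatJ quat0) ((2:Fin 4),(0:Fin 2),a)) ((0:Fin 4),(0:Fin 2),b)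
  rw [mul_tp_apply, tp_mul_apply] at h
  simp [eu, Matrix.single, Matrix.one_apply, diag22, bm, qJ, qK,
    Fin.sum_univ_four, Fin.sum_univ_two,
    Matrix.reindex_apply, Matrix.submatrix_apply, fse0, fse1, fse2, fse3] at h
  first
  | exact h
  | linear_combination h
  | linear_combination -h
  | linear_combination (Complex.I/2) * h + β (2,0,a) (1,0,b) * Complex.I_sq
  | linear_combination (-(Complex.I)/2) * h + β (2,0,a) (1,0,b) * Complex.I_sq

include hq in
lemma z30 (a b : Fin 4) : β (3,0,a) (0,0,b) = 0 := by
  have h := congrFun (congrFun (hq qJ 0 quatJ quat0) ((3:Fin 4),(0:Fin 2),a)) ((1:Fin 4),(0:Fin 2),b)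
  rw [mul_tp_apply, tp_mul_apply] at h
  simp [eu, Matrix.single, Matrix.one_apply, diag22, bm, qJ, qK,
    Fin.sum_univ_four, Fin.sum_univ_two,
    Matrix.reindex_apply, Matrix.submatrix_apply, fse0, fse1, fse2, fse3] at h
  first
  | exact h
  | linear_combination h
  | linear_combination -h
  | linear_combination (Complex.I/2) * h + β (3,0,a) (0,0,b) * Complex.I_sq
  | linear_combination (-(Complex.I)/2) * h + β (3,0,a) (0,0,b) * Complex.I_sq

include hq in
lemma z31 (a b : Fin 4) : β (3,0,a) (1,0,b) = 0 := by
  have h := congrFun (congrFun (hq qJ 0 quatJ quat0) ((3:Fin 4),(0:Fin 2),a)) ((0:Fin 4),(0:Fin 2),b)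
  rw [mul_tp_apply, tp_mul_apply] at h
  simp [eu, Matrix.single, Matrix.one_apply, diag22, bm, qJ, qK,
    Fin.sum_univ_four, Fin.sum_univ_two,
    Matrix.reindex_apply, Matrix.submatrix_apply, fse0, fse1, fse2, fse3] at h
  first
  | exact h
  | linear_combination h
  | linear_combination -h
  | linear_combination (Complex.I/2) * h + β (3,0,a) (1,0,b) * Complex.I_sq
  | linear_combination (-(Complex.I)/2) * h + β (3,0,a) (1,0,b) * Complex.I_sq

include hq in
lemma d01 (a b : Fin 4) : β (0,0,a) (0,0,b) = β (1,0,a) (1,0,b) := by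
  have h := congrFun (congrFun (hq qJ 0 quatJ quat0) ((0:Fin 4),(0:Fin 2),a)) ((1:Fin 4),(0:Fin 2),b)
  rw [mul_tp_apply, tp_mul_apply] at h
  simp [eu, Matrix.single, Matrix.one_apply, diag22, bm, qJ,
    Fin.sum_univ_four, Fin.sum_univ_two,
    Matrix.reindex_apply, Matrix.submatrix_apply, fse0, fse1, fse2, fse3] at h
  first | exact h | linear_combination h | linear_combination -h

include hq in
lemma d23 (a b : Fin 4) : β (2,0,a) (2,0,b) = β (3,0,a) (3,0,b) := by
  have h := congrFun (congrFun (hq 0 qJ quat0 quatJ) ((2:Fin 4),(0:Fin 2),a)) ((3:Fin 4),(0:Fin 2),b)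
  rw [mul_tp_apply, tp_mul_apply] at h
  simp [eu, Matrix.single, Matrix.one_apply, diag22, bm, qJ,
    Fin.sum_univ_four, Fin.sum_univ_two,
    Matrix.reindex_apply, Matrix.submatrix_apply, fse0, fse1, fse2, fse3] at h
  first | exact h | linear_combination h | linear_combination -h

include hq in
lemma z00 (i j : Fin 4) (a b : Fin 4) (hij : i ≠ j) : β (i,0,a) (j,0,b) = 0 := by
  fin_cases i <;> fin_cases j <;>
    first
    | exact absurd rfl hij
    | exact z01 β hq a b | exact z10 β hq a b | exact z23 β hq a b | exact z32 β hq a b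
    | exact z02 β hq a b | exact z12 β hq a b | exact z03 β hq a b | exact z13 β hq a b
    | exact z20 β hq a b | exact z21 β hq a b | exact z30 β hq a b | exact z31 β hq a b
end Main
lemma diag22_smul_apply (x y : ℂ) (i j : Fin 4) :
    diag22 (x•1) (y•1) i j = if i = j then (if i.val < 2 then x else y) else 0 := by
  fin_cases i <;> fin_cases j <;>
    simp [diag22, bm, Matrix.reindex_apply, Matrix.submatrix_apply, fse0, fse1, fse2, fse3,
      Matrix.one_apply]

lemma diag22_one : diag22 1 1 = 1 := by
  ext i j
  fin_cases i <;> fin_cases j <;>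
    simp [diag22, bm, Matrix.reindex_apply, Matrix.submatrix_apply, fse0, fse1, fse2, fse3,
      Matrix.one_apply]

lemma diag22_zero : diag22 0 0 = 0 := by
  ext i j
  fin_cases i <;> fin_cases j <;>
    simp [diag22, bm, Matrix.reindex_apply, Matrix.submatrix_apply, fse0, fse1, fse2, fse3]

lemma tp_zeroA (E : M2) (B : M4) : tp 0 E B = 0 := by
  ext p q; simp [tp]

lemma T_eq_diagonal (x y : ℂ) :
    tp (diag22 (x•1) (y•1)) (eu 0 0) 1 + tp 1 (eu 1 1) (diag22 (x•1) (y•1)) =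
    Matrix.diagonal (fun p : Idx =>
      if p.2.1 = 0 then (if p.1.val < 2 then x else y)
      else (if p.2.2.val < 2 then x else y)) := by
  ext ⟨i,s,a⟩ ⟨j,t,b⟩
  simp only [Matrix.add_apply, tp, Matrix.of_apply, Matrix.diagonal_apply]
  rw [diag22_smul_apply, diag22_smul_apply]
  fin_cases s <;> fin_cases t <;>
    by_cases hij : i = j <;> by_cases hab : a = b <;>
      simp [eu, Matrix.single, Matrix.one_apply, Prod.ext_iff, hij, hab]
set_option maxHeartbeats 1000000 in
/-- Any self-adjoint `β` with `β² = 1`, `βJ = Jβ`, commuting with the represented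
unreduced Pati–Salam algebra (no one-term assumption) is of the form
`diag(η₁1₂, η₂1₂) ⊗ e₁₁ ⊗ 1₄ + 1₄ ⊗ e₂₂ ⊗ diag(η₁1₂, η₂1₂)` with `η₁, η₂ = ±1`;
in particular `β` is one of four operators, the nontrivial ones (up to sign)
being `±1` and `±(diag(1₂,-1₂) ⊗ e₁₁ ⊗ 1₄ + 1₄ ⊗ e₂₂ ⊗ diag(1₂,-1₂))`. -/
theorem beta_unreduced_general (β : M32)
    (hsa : βᴴ = β) (hsq : β * β = 1) (hJ : Jconj β = β)
    (hcomm : ∀ (q₁ q₂ : M2) (m : M4), IsQuat q₁ → IsQuat q₂ →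
      β * piPS q₁ q₂ m = piPS q₁ q₂ m * β) :
    (∃ η₁ η₂ : ℂ, (η₁ = 1 ∨ η₁ = -1) ∧ (η₂ = 1 ∨ η₂ = -1) ∧
      β = tp (diag22 (η₁ • 1) (η₂ • 1)) (eu 0 0) 1 +
          tp 1 (eu 1 1) (diag22 (η₁ • 1) (η₂ • 1))) ∧
    (β = 1 ∨ β = -1 ∨ β = betaPS ∨ β = -betaPS) := by
  have hm : ∀ m : M4, β * tp m (eu 1 1) 1 = tp m (eu 1 1) 1 * β := by
    intro m
    have h := hcomm 0 0 m quat0 quat0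
    simpa [piPS, diag22_zero, tp_zeroA] using h
  have hq : ∀ q₁ q₂ : M2, IsQuat q₁ → IsQuat q₂ →
      β * tp (diag22 q₁ q₂) (eu 0 0) 1 = tp (diag22 q₁ q₂) (eu 0 0) 1 * β := by
    intro q₁ q₂ h1 h2
    have h := hcomm q₁ q₂ 0 h1 h2
    simpa [piPS, tp_zeroA] using h
  have hA := lemA β (by simpa [diag22_one] using hq 1 1 quat1 quat1)
  have hJe : ∀ p q : Idx, conj (β (sw p) (sw q)) = β p q := fun p q =>
    congrFun (congrFun hJ p) q
  have hsaE : ∀ p q : Idx, conj (β p q) = β q p := fun p q => by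
    have h := congrFun (congrFun hsa q) p
    simpa [Matrix.conjTranspose_apply] using h
  have hswap : ∀ i a j b : Fin 4, β (i,0,a) (j,0,b) = conj (β (a,1,i) (b,1,j)) := by
    intro i a j b
    have h := hJe (i,0,a) (j,0,b)
    simp only [sw] at h
    norm_num at h
    exact h.symm
  have h11d := b11_diag β hm
  have h11od := b11_offdiag β hm
  have f_off : ∀ i j : Fin 4, i ≠ j → β (0,1,i) (0,1,j) = 0 := by
    intro i j hij
    have h := hswap i 0 j 0
    rw [z00 β hq i j 0 0 hij] at h
    exact star_eq_zero.mp h.symm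
  have z00ab : ∀ i j a b : Fin 4, a ≠ b → β (i,0,a) (j,0,b) = 0 := by
    intro i j a b hab
    rw [hswap i a j b, h11od a b i j hab, map_zero]
  have e00diag : ∀ i a : Fin 4, β (i,0,a) (i,0,a) = conj (β (0,1,i) (0,1,i)) := by
    intro i a
    rw [hswap i a i a, h11d a i i]
  have v0 : ∀ a : Fin 4, β (0,0,a) (0,0,a) = β (0,0,0) (0,0,0) := fun a => by
    rw [e00diag 0 a, ← e00diag 0 0]
  have v1 : ∀ a : Fin 4, β (1,0,a) (1,0,a) = β (0,0,0) (0,0,0) := fun a => by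
    rw [← d01 β hq a a]; exact v0 a
  have v2 : ∀ a : Fin 4, β (2,0,a) (2,0,a) = β (2,0,0) (2,0,0) := fun a => by
    rw [e00diag 2 a, ← e00diag 2 0]
  have v3 : ∀ a : Fin 4, β (3,0,a) (3,0,a) = β (2,0,0) (2,0,0) := fun a => by
    rw [← d23 β hq a a]; exact v2 a
  have hr1 : conj (β ((0:Fin 4),(0:Fin 2),(0:Fin 4)) (0,0,0)) = β (0,0,0) (0,0,0) :=
    hsaE (0,0,0) (0,0,0)
  have hr2 : conj (β ((2:Fin 4),(0:Fin 2),(0:Fin 4)) (2,0,0)) = β (2,0,0) (2,0,0) :=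
    hsaE (2,0,0) (2,0,0)
  have key : ∀ i : Fin 4, β ((0:Fin 4),(1:Fin 2),i) (0,1,i) = conj (β (i,0,0) (i,0,0)) := by
    intro i
    have h := congrArg conj (e00diag i 0)
    rw [Complex.conj_conj] at h
    exact h.symm
  have hF0 : β ((0:Fin 4),(1:Fin 2),(0:Fin 4)) (0,1,0) = β ((0:Fin 4),(0:Fin 2),(0:Fin 4)) (0,0,0) := by
    rw [key 0]; exact hr1
  have hF1 : β ((0:Fin 4),(1:Fin 2),(1:Fin 4)) (0,1,1) = β ((0:Fin 4),(0:Fin 2),(0:Fin 4)) (0,0,0) := by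
    rw [key 1, v1 0]; exact hr1
  have hF2 : β ((0:Fin 4),(1:Fin 2),(2:Fin 4)) (0,1,2) = β ((2:Fin 4),(0:Fin 2),(0:Fin 4)) (2,0,0) := by
    rw [key 2]; exact hr2
  have hF3 : β ((0:Fin 4),(1:Fin 2),(3:Fin 4)) (0,1,3) = β ((2:Fin 4),(0:Fin 2),(0:Fin 4)) (2,0,0) := by
    rw [key 3, v3 0]; exact hr2
  have hdiag : β = Matrix.diagonal (fun p : Idx =>
      if p.2.1 = 0 then (if p.1.val < 2 then β ((0:Fin 4),(0:Fin 2),(0:Fin 4)) (0,0,0)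
          else β ((2:Fin 4),(0:Fin 2),(0:Fin 4)) (2,0,0))
      else (if p.2.2.val < 2 then β ((0:Fin 4),(0:Fin 2),(0:Fin 4)) (0,0,0)
          else β ((2:Fin 4),(0:Fin 2),(0:Fin 4)) (2,0,0))) := by
    ext ⟨i,s,a⟩ ⟨j,t,b⟩
    rw [Matrix.diagonal_apply]
    fin_cases s <;> fin_cases t
    · -- s = 0, t = 0
      by_cases hij : i = j
      · subst hij
        by_cases hab : a = b
        · subst hab
          rw [if_pos rfl]
          fin_cases i
          · simpa using v0 a
          · simpa using v1 a
          · simpa using v2 a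
          · simpa using v3 a
        · rw [if_neg (by simp [Prod.ext_iff, hab])]
          exact z00ab i i a b hab
      · rw [if_neg (by simp [Prod.ext_iff, hij])]
        exact z00 β hq i j a b hij
    · -- s = 0, t = 1
      rw [if_neg (by simp [Prod.ext_iff])]
      exact (hA i a j b).1
    · -- s = 1, t = 0
      rw [if_neg (by simp [Prod.ext_iff])]
      exact (hA i a j b).2
    · -- s = 1, t = 1
      by_cases hij : i = j
      · subst hij
        by_cases hab : a = b
        · subst hab
          rw [if_pos rfl]
          refine (h11d i a a).trans ?_
          fin_cases a
          · simpa using hF0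
          · simpa using hF1
          · simpa using hF2
          · simpa using hF3
        · rw [if_neg (by simp [Prod.ext_iff, hab])]
          exact (h11d i a b).trans (f_off a b hab)
      · rw [if_neg (by simp [Prod.ext_iff, hij])]
        exact h11od i j a b hij
  have hsqd := hsq
  rw [hdiag, Matrix.diagonal_mul_diagonal] at hsqd
  have hdsq : ∀ p : Idx,
      (if p.2.1 = 0 then (if p.1.val < 2 then β ((0:Fin 4),(0:Fin 2),(0:Fin 4)) (0,0,0)
          else β ((2:Fin 4),(0:Fin 2),(0:Fin 4)) (2,0,0))
      else (if p.2.2.val < 2 then β ((0:Fin 4),(0:Fin 2),(0:Fin 4)) (0,0,0)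
          else β ((2:Fin 4),(0:Fin 2),(0:Fin 4)) (2,0,0))) *
      (if p.2.1 = 0 then (if p.1.val < 2 then β ((0:Fin 4),(0:Fin 2),(0:Fin 4)) (0,0,0)
          else β ((2:Fin 4),(0:Fin 2),(0:Fin 4)) (2,0,0))
      else (if p.2.2.val < 2 then β ((0:Fin 4),(0:Fin 2),(0:Fin 4)) (0,0,0)
          else β ((2:Fin 4),(0:Fin 2),(0:Fin 4)) (2,0,0))) = 1 := by
    intro p
    have h := congrFun (congrFun hsqd p) p
    simpa [Matrix.diagonal_apply, Matrix.one_apply] using h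
  have hη1 : β ((0:Fin 4),(0:Fin 2),(0:Fin 4)) (0,0,0) = 1 ∨
      β ((0:Fin 4),(0:Fin 2),(0:Fin 4)) (0,0,0) = -1 :=
    mul_self_eq_one_iff.mp (by simpa using hdsq (0,0,0))
  have hη2 : β ((2:Fin 4),(0:Fin 2),(0:Fin 4)) (2,0,0) = 1 ∨
      β ((2:Fin 4),(0:Fin 2),(0:Fin 4)) (2,0,0) = -1 :=
    mul_self_eq_one_iff.mp (by simpa using hdsq (2,0,0))
  constructor
  · exact ⟨_, _, hη1, hη2, by rw [T_eq_diagonal]; exact hdiag⟩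
  · have hbPS : betaPS = Matrix.diagonal (fun p : Idx =>
        if p.2.1 = 0 then (if p.1.val < 2 then (1:ℂ) else -1)
        else (if p.2.2.val < 2 then (1:ℂ) else -1)) := by
      have h := T_eq_diagonal 1 (-1)
      simpa [betaPS] using h
    rcases hη1 with h1 | h1 <;> rcases hη2 with h2 | h2
    · left
      rw [hdiag, h1, h2, show (fun p : Idx => if p.2.1 = 0 then
          (if p.1.val < 2 then (1:ℂ) else 1) else (if p.2.2.val < 2 then (1:ℂ) else 1)) =
          fun _ => (1:ℂ) from funext fun p => by simp]
      exact Matrix.diagonal_one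
    · right; right; left
      rw [hdiag, h1, h2, hbPS]
    · right; right; right
      rw [hdiag, h1, h2, hbPS, Matrix.diagonal_neg]
      refine congrArg Matrix.diagonal (funext fun p => ?_)
      by_cases h : p.2.1 = 0 <;> by_cases h' : p.1.val < 2 <;> by_cases h'' : p.2.2.val < 2 <;>
        simp [h, h', h'']
    · right; left
      rw [hdiag, h1, h2, ← Matrix.diagonal_one (n := Idx) (α := ℂ), Matrix.diagonal_neg]
      refine congrArg Matrix.diagonal (funext fun p => ?_)
      by_cases h : p.2.1 = 0 <;> by_cases h' : p.1.val < 2 <;> by_cases h'' : p.2.2.val < 2 <;>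
        simp [h, h', h'']
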